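/- There exists an injective function ext defined on all nonempty subsets of {0,...,2M-1} of size at most M-1 such that ext(S) ⊇ S and |ext(S)| = |S| + 1 for every such S, where M ≥ 2. -/

import Mathlib

/-- There is an injective function `ext` defined on all nonempty subsets of `{0,...,2M-1}`
of size at most `M-1` such that `S ⊆ ext S` and `|ext S| = |S| + 1`, where `M ≥ 2`. -/
theorem extension_function_union (M : ℕ) (hM : 2 ≤ M) :
    ∃ ext : {S : Finset (Fin (2 * M)) // S.Nonempty ∧ S.card ≤ M - 1} → Finset (Fin (2 * M)),
      Function.Injective ext ∧ ∀ S, S.1 ⊆ ext S ∧ (ext S).card = S.1.card + 1 := by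
  classical
  set ι := {S : Finset (Fin (2 * M)) // S.Nonempty ∧ S.card ≤ M - 1} with hι
  let t : ι → Finset (Finset (Fin (2 * M))) :=
    fun S => Finset.univ.filter (fun T => S.1 ⊆ T ∧ T.card = S.1.card + 1)
  have hmem : ∀ (S : ι) (T : Finset (Fin (2 * M))),
      T ∈ t S ↔ S.1 ⊆ T ∧ T.card = S.1.card + 1 := by
    intro S T; simp [t]
  -- lower bound: each vertex on the left has at least M + 1 neighbors
  have hlb : ∀ S : ι, M + 1 ≤ (t S).card := by
    intro S
    have hcard : S.1.card ≤ M - 1 := S.2.2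
    have h1 : M + 1 ≤ S.1ᶜ.card := by
      have hle : S.1.card ≤ 2 * M := by
        have := Finset.card_le_univ S.1
        simpa using this
      rw [Finset.card_compl, Fintype.card_fin]
      omega
    refine le_trans h1 (Finset.card_le_card_of_injOn (fun x => insert x S.1) ?_ ?_)
    · intro x hx
      rw [Finset.mem_coe, Finset.mem_compl] at hx
      rw [Finset.mem_coe, hmem]
      exact ⟨Finset.subset_insert _ _, Finset.card_insert_of_notMem hx⟩
    · intro x hx y hy hxy
      rw [Finset.mem_coe, Finset.mem_compl] at hx hy
      have : x ∈ insert y S.1 := by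
        have h' : insert x S.1 = insert y S.1 := hxy
        rw [← h']; exact Finset.mem_insert_self x S.1
      rcases Finset.mem_insert.mp this with h | h
      · exact h
      · exact absurd h hx
  -- Hall's condition via double counting
  have hall : ∀ s : Finset ι, s.card ≤ (s.biUnion t).card := by
    intro s
    set N := s.biUnion t with hN
    have hsub : ∀ S ∈ s, t S ⊆ N := fun S hS => Finset.subset_biUnion_of_mem t hS
    -- upper bound on fibers
    have hub : ∀ T ∈ N, (s.filter (fun S => T ∈ t S)).card ≤ M := by
      intro T hT
      obtain ⟨S₀, hS₀s, hS₀⟩ := Finset.mem_biUnion.mp hT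
      rw [hmem] at hS₀
      have hTcard : T.card ≤ M := by
        have := S₀.2.2
        omega
      have hT1 : 1 ≤ T.card := by omega
      calc (s.filter (fun S => T ∈ t S)).card
          ≤ (T.powersetCard (T.card - 1)).card := by
            refine Finset.card_le_card_of_injOn (fun S => S.1) ?_ ?_
            · intro S hS
              rw [Finset.mem_coe, Finset.mem_filter] at hS
              rw [hmem] at hS
              rw [Finset.mem_coe, Finset.mem_powersetCard]
              refine ⟨hS.2.1, ?_⟩
              show S.1.card = T.card - 1
              omega
            · intro a _ b _ hab
              exact Subtype.ext hab
        _ = T.card.choose (T.card - 1) := Finset.card_powersetCard _ _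
        _ = T.card.choose 1 := by
            have h : T.card - (T.card - 1) = 1 := by omega
            rw [← h, Nat.choose_symm (by omega)]
        _ = T.card := Nat.choose_one_right _
        _ ≤ M := hTcard
    have h1 : s.card * (M + 1) ≤ ∑ S ∈ s, (t S).card := by
      calc s.card * (M + 1) = ∑ _S ∈ s, (M + 1) := by rw [Finset.sum_const, smul_eq_mul]
        _ ≤ ∑ S ∈ s, (t S).card := Finset.sum_le_sum (fun S _ => hlb S)
    have h2 : ∑ S ∈ s, (t S).card = ∑ T ∈ N, (s.filter (fun S => T ∈ t S)).card := by
      calc ∑ S ∈ s, (t S).card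
          = ∑ S ∈ s, ∑ T ∈ N, (if T ∈ t S then 1 else 0) := by
            refine Finset.sum_congr rfl fun S hS => ?_
            rw [← Finset.card_filter]
            congr 1
            rw [Finset.filter_mem_eq_inter, Finset.inter_eq_right.mpr (hsub S hS)]
        _ = ∑ T ∈ N, ∑ S ∈ s, (if T ∈ t S then 1 else 0) := Finset.sum_comm
        _ = ∑ T ∈ N, (s.filter (fun S => T ∈ t S)).card := by
            exact Finset.sum_congr rfl fun T _ => (Finset.card_filter _ _).symm
    have h3 : ∑ T ∈ N, (s.filter (fun S => T ∈ t S)).card ≤ N.card * M := by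
      calc ∑ T ∈ N, (s.filter (fun S => T ∈ t S)).card
          ≤ ∑ _T ∈ N, M := Finset.sum_le_sum hub
        _ = N.card * M := by rw [Finset.sum_const, smul_eq_mul]
    have h4 : s.card * (M + 1) ≤ N.card * (M + 1) := by
      nlinarith [h1.trans (h2.le.trans h3)]
    exact Nat.le_of_mul_le_mul_right h4 (by omega)
  obtain ⟨f, hinj, hf⟩ := (Finset.all_card_le_biUnion_card_iff_exists_injective t).mp hall
  refine ⟨f, hinj, fun S => ?_⟩
  have := hf S
  rw [hmem] at this
  exact this
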